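/- Let X be a nonempty finite subset of the hyperbolic plane ℍ with diameter D, contained in closedBall(o, R) with some point of X at distance exactly R from o, let c be a barycenter of X, and let μ ≥ 0. Suppose q ∈ X satisfies dist(o, q) ≥ R − μ and D/2 ≤ dist(q, o), and let g be a unit-speed geodesic from q to o. Then dist(g(D/2), c) ≤ 45 + (3/2)·μ. -/

import Mathlib

open scoped UpperHalfPlane

lemma sinh_ptolemy (x y z w : ℍ) :
    Real.sinh (dist x y / 2) * Real.sinh (dist z w / 2) ≤
      Real.sinh (dist x z / 2) * Real.sinh (dist y w / 2) +
        Real.sinh (dist x w / 2) * Real.sinh (dist y z / 2) := by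
  have h := EuclideanGeometry.mul_dist_le_mul_dist_add_mul_dist (x : ℂ) (z : ℂ) (y : ℂ) (w : ℂ)
  have hx := x.im_pos
  have hy := y.im_pos
  have hz := z.im_pos
  have hw := w.im_pos
  simp only [UpperHalfPlane.sinh_half_dist, Real.sqrt_mul (le_of_lt hx),
    Real.sqrt_mul (le_of_lt hy), Real.sqrt_mul (le_of_lt hz)]
  have hx' : (0:ℝ) < Real.sqrt x.im := Real.sqrt_pos.2 hx
  have hy' : (0:ℝ) < Real.sqrt y.im := Real.sqrt_pos.2 hy
  have hz' : (0:ℝ) < Real.sqrt z.im := Real.sqrt_pos.2 hz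
  have hw' : (0:ℝ) < Real.sqrt w.im := Real.sqrt_pos.2 hw
  rw [div_mul_div_comm, div_mul_div_comm, div_mul_div_comm,
    div_add_div _ _ (by positivity) (by positivity), div_le_div_iff₀ (by positivity) (by positivity)]
  rw [dist_comm (z:ℂ) (y:ℂ)] at h
  have key := mul_le_mul_of_nonneg_right h
    (show (0:ℝ) ≤ 16 * (Real.sqrt x.im * Real.sqrt y.im * Real.sqrt z.im * Real.sqrt w.im)^2 by
      positivity)
  calc dist (x:ℂ) (y:ℂ) * dist (z:ℂ) (w:ℂ) *
        (2 * (Real.sqrt x.im * Real.sqrt z.im) * (2 * (Real.sqrt y.im * Real.sqrt w.im)) *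
          (2 * (Real.sqrt x.im * Real.sqrt w.im) * (2 * (Real.sqrt y.im * Real.sqrt z.im))))
      = dist (x:ℂ) (y:ℂ) * dist (z:ℂ) (w:ℂ) *
        (16 * (Real.sqrt x.im * Real.sqrt y.im * Real.sqrt z.im * Real.sqrt w.im)^2) := by ring
    _ ≤ (dist (x:ℂ) (z:ℂ) * dist (y:ℂ) (w:ℂ) + dist (y:ℂ) (z:ℂ) * dist (x:ℂ) (w:ℂ)) *
        (16 * (Real.sqrt x.im * Real.sqrt y.im * Real.sqrt z.im * Real.sqrt w.im)^2) := key
    _ = (dist (x:ℂ) (z:ℂ) * dist (y:ℂ) (w:ℂ) * (2 * (Real.sqrt x.im * Real.sqrt w.im) *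
          (2 * (Real.sqrt y.im * Real.sqrt z.im))) +
        2 * (Real.sqrt x.im * Real.sqrt z.im) * (2 * (Real.sqrt y.im * Real.sqrt w.im)) *
          (dist (x:ℂ) (w:ℂ) * dist (y:ℂ) (z:ℂ))) *
        (2 * (Real.sqrt x.im * Real.sqrt y.im) * (2 * (Real.sqrt z.im * Real.sqrt w.im))) := by
      ring

lemma four_point (x y z w : ℍ) :
    dist x y + dist z w ≤ max (dist x z + dist y w) (dist x w + dist y z) + 15 := by
  set M := max (dist x z + dist y w) (dist x w + dist y z) with hM
  have h1 : dist x z + dist y w ≤ M := le_max_left _ _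
  have h2 : dist x w + dist y z ≤ M := le_max_right _ _
  rcases le_or_gt (dist x y) 8 with hA | hA
  · have t1 : dist z w ≤ dist z x + dist x w := dist_triangle _ _ _
    have t2 : dist z w ≤ dist z y + dist y w := dist_triangle _ _ _
    rw [dist_comm z x] at t1
    rw [dist_comm z y] at t2
    linarith
  rcases le_or_gt (dist z w) 8 with hB | hB
  · have t1 : dist x y ≤ dist x z + dist z y := dist_triangle _ _ _
    have t2 : dist x y ≤ dist x w + dist w y := dist_triangle _ _ _
    rw [dist_comm z y] at t1
    rw [dist_comm w y] at t2
    linarith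
  -- both distances exceed 8
  have e2 : (3:ℝ) ≤ Real.exp 2 := by have := Real.add_one_le_exp (2:ℝ); linarith
  have e4 : (9:ℝ) ≤ Real.exp 4 := by
    have h : Real.exp 4 = Real.exp 2 * Real.exp 2 := by rw [← Real.exp_add]; norm_num
    nlinarith [Real.exp_pos 2]
  have lower : ∀ a b : ℍ, 8 < dist a b →
      (4/9 : ℝ) * Real.exp (dist a b / 2) ≤ Real.sinh (dist a b / 2) := by
    intro a b hab
    have hE : (9:ℝ) ≤ Real.exp (dist a b / 2) :=
      le_trans e4 (Real.exp_le_exp.2 (by linarith))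
    rw [Real.sinh_eq, Real.exp_neg]
    have hinv : (Real.exp (dist a b / 2))⁻¹ ≤ 1 := by
      rw [inv_le_one_iff₀]; right; linarith
    linarith
  have upper : ∀ a b : ℍ, Real.sinh (dist a b / 2) ≤ Real.exp (dist a b / 2) / 2 := by
    intro a b
    rw [Real.sinh_eq]
    have := Real.exp_pos (-(dist a b / 2))
    linarith
  have snn : ∀ a b : ℍ, 0 ≤ Real.sinh (dist a b / 2) := fun a b =>
    Real.sinh_nonneg_iff.2 (by positivity)
  have hP := sinh_ptolemy x y z w
  -- upper bound for RHS of Ptolemy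
  have hu1 : Real.sinh (dist x z / 2) * Real.sinh (dist y w / 2) ≤
      Real.exp (M / 2) / 4 := by
    calc Real.sinh (dist x z / 2) * Real.sinh (dist y w / 2)
        ≤ (Real.exp (dist x z / 2) / 2) * (Real.exp (dist y w / 2) / 2) := by
          apply mul_le_mul (upper x z) (upper y w) (snn y w) (by positivity)
      _ = Real.exp ((dist x z + dist y w) / 2) / 4 := by
          rw [show (dist x z + dist y w) / 2 = dist x z / 2 + dist y w / 2 by ring,
            Real.exp_add]; ring
      _ ≤ Real.exp (M / 2) / 4 := by
          have := Real.exp_le_exp.2 (show (dist x z + dist y w) / 2 ≤ M / 2 by linarith)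
          linarith
  have hu2 : Real.sinh (dist x w / 2) * Real.sinh (dist y z / 2) ≤
      Real.exp (M / 2) / 4 := by
    calc Real.sinh (dist x w / 2) * Real.sinh (dist y z / 2)
        ≤ (Real.exp (dist x w / 2) / 2) * (Real.exp (dist y z / 2) / 2) := by
          apply mul_le_mul (upper x w) (upper y z) (snn y z) (by positivity)
      _ = Real.exp ((dist x w + dist y z) / 2) / 4 := by
          rw [show (dist x w + dist y z) / 2 = dist x w / 2 + dist y z / 2 by ring,
            Real.exp_add]; ring
      _ ≤ Real.exp (M / 2) / 4 := by
          have := Real.exp_le_exp.2 (show (dist x w + dist y z) / 2 ≤ M / 2 by linarith)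
          linarith
  -- lower bound for LHS of Ptolemy
  have hl : (16/81 : ℝ) * Real.exp ((dist x y + dist z w) / 2) ≤
      Real.sinh (dist x y / 2) * Real.sinh (dist z w / 2) := by
    have l1 := lower x y hA
    have l2 := lower z w hB
    have p1 : (0:ℝ) < Real.exp (dist x y / 2) := Real.exp_pos _
    have p2 : (0:ℝ) < Real.exp (dist z w / 2) := Real.exp_pos _
    calc (16/81 : ℝ) * Real.exp ((dist x y + dist z w) / 2)
        = ((4/9 : ℝ) * Real.exp (dist x y / 2)) * ((4/9 : ℝ) * Real.exp (dist z w / 2)) := by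
          rw [show (dist x y + dist z w) / 2 = dist x y / 2 + dist z w / 2 by ring,
            Real.exp_add]; ring
      _ ≤ Real.sinh (dist x y / 2) * Real.sinh (dist z w / 2) := by
          apply mul_le_mul l1 l2 (by positivity) (snn x y)
  -- combine
  have key : Real.exp ((dist x y + dist z w) / 2) ≤ Real.exp ((M + 15) / 2) := by
    have hc : (16/81 : ℝ) * Real.exp ((dist x y + dist z w) / 2) ≤ Real.exp (M / 2) / 2 := by
      linarith
    have hsplit : Real.exp ((M + 15) / 2) = Real.exp (M / 2) * Real.exp (15/2) := by
      rw [← Real.exp_add]; ring_nf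
    have h15 : (3:ℝ) ≤ Real.exp (15/2) := le_trans e2 (Real.exp_le_exp.2 (by norm_num))
    have := Real.exp_pos (M / 2)
    nlinarith
  have := Real.exp_le_exp.1 key
  linarith

lemma exists_dist_eq_diam {X : Set ℍ} (hfin : X.Finite) (hne : X.Nonempty) :
    ∃ x ∈ X, ∃ y ∈ X, dist x y = Metric.diam X := by
  obtain ⟨⟨x, y⟩, hxy, hmax⟩ := Set.Finite.exists_maximalFor
    (fun p : ℍ × ℍ => dist p.1 p.2) (X ×ˢ X) (hfin.prod hfin) (hne.prod hne)
  obtain ⟨hx, hy⟩ := hxy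
  refine ⟨x, hx, y, hy, le_antisymm (Metric.dist_le_diam_of_mem hfin.isBounded hx hy) ?_⟩
  apply Metric.diam_le_of_forall_dist_le dist_nonneg
  intro u hu v hv
  by_contra hlt
  push_neg at hlt
  have := hmax (j := (u, v)) ⟨hu, hv⟩ (le_of_lt hlt)
  simp only at this
  linarith

/-- `c` is a barycenter of `X` if it is the center of a smallest closed ball containing
`X`. -/
def IsBarycenter (X : Set ℍ) (c : ℍ) : Prop :=
  ∃ r : ℝ, 0 ≤ r ∧ X ⊆ Metric.closedBall c r ∧
    ∀ (c' : ℍ) (r' : ℝ), 0 ≤ r' → X ⊆ Metric.closedBall c' r' → r ≤ r'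

/-- `g` is a unit-speed geodesic from `a` to `b` in the hyperbolic plane. -/
def IsUnitSpeedGeodesic (g : ℝ → ℍ) (a b : ℍ) : Prop :=
  g 0 = a ∧ g (dist a b) = b ∧
    ∀ s t : ℝ, s ∈ Set.Icc 0 (dist a b) → t ∈ Set.Icc 0 (dist a b) →
      dist (g s) (g t) = |s - t|

/-- Barycenter approximation with `δ = 5`: traveling `D/2` along the geodesic from a
near-boundary point `q` of `X` towards the center lands `(45 + 3μ/2)`-close to the
barycenter of `X`. -/
theorem barycenter_approximation (X : Set ℍ) (hfin : X.Finite) (hne : X.Nonempty)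
    (o : ℍ) (R : ℝ) (hR : 0 ≤ R) (hXR : X ⊆ Metric.closedBall o R)
    (p' : ℍ) (hp' : p' ∈ X) (hdist : dist o p' = R)
    (c : ℍ) (hc : IsBarycenter X c)
    (μ : ℝ) (hμ : 0 ≤ μ)
    (q : ℍ) (hq : q ∈ X) (hqμ : R - μ ≤ dist o q)
    (hD : Metric.diam X / 2 ≤ dist q o)
    (g : ℝ → ℍ) (hg : IsUnitSpeedGeodesic g q o) :
    dist (g (Metric.diam X / 2)) c ≤ 45 + 3 / 2 * μ := by
  obtain ⟨r, hr0, hrcov, hrmin⟩ := hc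
  obtain ⟨hg0, hgβ, hgiso⟩ := hg
  set D := Metric.diam X with hDdef
  set β := dist q o with hβdef
  have hD0 : 0 ≤ D := Metric.diam_nonneg
  have hβR : β ≤ R := Metric.mem_closedBall.1 (hXR hq)
  have hβμ : R - β ≤ μ := by rw [dist_comm o q] at hqμ; linarith
  have hβ0 : 0 ≤ β := dist_nonneg
  -- distances along the geodesic
  have hgdist : ∀ t : ℝ, 0 ≤ t → t ≤ β → dist (g t) q = t ∧ dist (g t) o = β - t := by
    intro t ht0 htβ
    constructor
    · have := hgiso t 0 ⟨ht0, htβ⟩ ⟨le_refl 0, hβ0⟩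
      rw [hg0] at this
      rw [this, sub_zero, abs_of_nonneg ht0]
    · have := hgiso t β ⟨ht0, htβ⟩ ⟨hβ0, le_refl β⟩
      rw [hgβ] at this
      rw [this, abs_of_nonpos (by linarith)]
      ring
  -- covering estimate for points on the geodesic
  have step : ∀ t : ℝ, 0 ≤ t → t ≤ β → ∀ z ∈ X,
      dist z (g t) ≤ max (D - t) (R - β + t) + 15 := by
    intro t ht0 htβ z hz
    obtain ⟨hgq, hgo⟩ := hgdist t ht0 htβ
    have h4 := four_point z (g t) q o
    have hzq : dist z q ≤ D := Metric.dist_le_diam_of_mem hfin.isBounded hz hq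
    have hzo : dist z o ≤ R := Metric.mem_closedBall.1 (hXR hz)
    have m1 : dist z q + dist (g t) o ≤ (D - t) + β := by rw [hgo]; linarith
    have m2 : dist z o + dist (g t) q ≤ (R - β + t) + β := by rw [hgq]; linarith
    have hm : max (dist z q + dist (g t) o) (dist z o + dist (g t) q) ≤
        max (D - t) (R - β + t) + β := by
      apply max_le
      · exact le_trans m1 (add_le_add_left (le_max_left _ _) β)
      · exact le_trans m2 (add_le_add_left (le_max_right _ _) β)
    have : dist z (g t) + β ≤ (max (D - t) (R - β + t) + β) + 15 := le_trans h4 (by linarith)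
    linarith
  have hm2 : 0 ≤ D / 2 ∧ D / 2 ≤ β := ⟨by linarith, hD⟩
  obtain ⟨hmq, hmo⟩ := hgdist (D / 2) hm2.1 hm2.2
  by_cases hcase : R ≤ D + β
  · -- main case
    set t₀ : ℝ := (D + β - R) / 2 with ht₀
    have ht₀0 : 0 ≤ t₀ := by rw [ht₀]; linarith
    have ht₀β : t₀ ≤ β := by rw [ht₀]; linarith
    have hr1 : r ≤ (D + R - β) / 2 + 15 := by
      apply hrmin (g t₀) _ (by linarith)
      intro z hz
      rw [Metric.mem_closedBall]
      have h := step t₀ ht₀0 ht₀β z hz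
      have : max (D - t₀) (R - β + t₀) ≤ (D + R - β) / 2 := by
        apply max_le <;> (rw [ht₀]; ring_nf; linarith)
      linarith
    have hr2 : ∀ z ∈ X, dist z (g (D / 2)) ≤ D / 2 + μ + 15 := by
      intro z hz
      have h := step (D / 2) hm2.1 hm2.2 z hz
      have : max (D - D / 2) (R - β + D / 2) ≤ D / 2 + μ := by
        apply max_le <;> linarith
      linarith
    obtain ⟨x, hx, y, hy, hxyD⟩ := exists_dist_eq_diam hfin hne
    have h4 := four_point x y c (g (D / 2))
    have hxc : dist x c ≤ r := Metric.mem_closedBall.1 (hrcov hx)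
    have hyc : dist y c ≤ r := Metric.mem_closedBall.1 (hrcov hy)
    have hxm : dist x (g (D / 2)) ≤ D / 2 + μ + 15 := hr2 x hx
    have hym : dist y (g (D / 2)) ≤ D / 2 + μ + 15 := hr2 y hy
    have hmax : max (dist x c + dist y (g (D / 2))) (dist x (g (D / 2)) + dist y c) ≤
        r + (D / 2 + μ + 15) := max_le (by linarith) (by linarith)
    have hcm : dist c (g (D / 2)) ≤ r + (D / 2 + μ + 15) + 15 - D := by
      rw [hxyD] at h4; linarith
    rw [dist_comm]
    linarith
  · -- degenerate case : everything is close to q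
    push_neg at hcase
    have hrD : r ≤ D := by
      apply hrmin q D hD0
      intro z hz
      rw [Metric.mem_closedBall]
      exact Metric.dist_le_diam_of_mem hfin.isBounded hz hq
    have hqc : dist q c ≤ r := Metric.mem_closedBall.1 (hrcov hq)
    have htri : dist (g (D / 2)) c ≤ dist (g (D / 2)) q + dist q c := dist_triangle _ _ _
    have hDμ : D ≤ μ := by linarith
    rw [hmq] at htri
    linarith
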